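/- Let η₁, η₂ be weights on ℝ^n (nonnegative locally integrable, positive a.e.) such that the ratio η₁/η₂ is not essentially bounded. Then there exists a locally integrable function b with sup_Q (1/η₁(Q)) ∫_Q |b − b_Q| dx < ∞ but sup_Q (1/η₂(Q)) ∫_Q |b − b_Q| dx = ∞, where η(Q) = ∫_Q η and b_Q = (1/|Q|)∫_Q b. -/

import Mathlib

open MeasureTheory

def cube (n : ℕ) (a : Fin n → ℝ) (h : ℝ) : Set (Fin n → ℝ) :=
  {x | ∀ i, a i ≤ x i ∧ x i ≤ a i + h}

/-- Normalized average `(1/|Q|) ∫_Q f`. -/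
noncomputable def avgI (n : ℕ) (Q : Set (Fin n → ℝ)) (f : (Fin n → ℝ) → ℝ) : ℝ :=
  (volume Q).toReal⁻¹ * ∫ x in Q, f x

section Helpers

open Set Filter Metric Topology ENNReal

lemma cube_eq_pi (n : ℕ) (a : Fin n → ℝ) (h : ℝ) :
    cube n a h = Set.univ.pi (fun i => Icc (a i) (a i + h)) := by
  ext x; simp only [cube, Set.mem_univ_pi, Set.mem_Icc, Set.mem_setOf_eq]

lemma measurableSet_cube (n : ℕ) (a : Fin n → ℝ) (h : ℝ) : MeasurableSet (cube n a h) := by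
  rw [cube_eq_pi]; exact MeasurableSet.univ_pi fun i => measurableSet_Icc

lemma isCompact_cube (n : ℕ) (a : Fin n → ℝ) (h : ℝ) : IsCompact (cube n a h) := by
  rw [cube_eq_pi]; exact isCompact_univ_pi fun i => isCompact_Icc

lemma volume_cube (n : ℕ) (a : Fin n → ℝ) {h : ℝ} (hh : 0 ≤ h) :
    volume (cube n a h) = ENNReal.ofReal (h ^ n) := by
  rw [cube_eq_pi, volume_pi_pi]
  simp [Real.volume_Icc, ← ENNReal.ofReal_pow hh]

lemma cube_subset_closedBall {n : ℕ} {a x : Fin n → ℝ} {h : ℝ} (hh : 0 ≤ h)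
    (hx : x ∈ cube n a h) : cube n a h ⊆ Metric.closedBall x h := by
  intro y hy
  rw [Metric.mem_closedBall, dist_pi_le_iff hh]
  intro i
  rw [Real.dist_eq, abs_le]
  constructor <;> nlinarith [(hx i).1, (hx i).2, (hy i).1, (hy i).2]

def lhalf (n : ℕ) (i0 : Fin n) (a : Fin n → ℝ) (h : ℝ) : Set (Fin n → ℝ) :=
  Set.univ.pi fun i => Icc (a i) (a i + if i = i0 then h / 2 else h)

lemma measurableSet_lhalf (n : ℕ) (i0 : Fin n) (a : Fin n → ℝ) (h : ℝ) :
    MeasurableSet (lhalf n i0 a h) :=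
  MeasurableSet.univ_pi fun i => measurableSet_Icc

lemma lhalf_subset_cube {n : ℕ} {i0 : Fin n} {a : Fin n → ℝ} {h : ℝ} (hh : 0 ≤ h) :
    lhalf n i0 a h ⊆ cube n a h := by
  intro x hx i
  have := hx i (Set.mem_univ i)
  simp only [Set.mem_Icc] at this
  constructor
  · exact this.1
  · refine this.2.trans ?_
    split_ifs with hi <;> [skip; rfl] <;> linarith

lemma volume_lhalf (n : ℕ) (i0 : Fin n) (a : Fin n → ℝ) {h : ℝ} (hh : 0 ≤ h) :
    volume (lhalf n i0 a h) = ENNReal.ofReal (h ^ n / 2) := by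
  rw [lhalf, volume_pi_pi]
  have step : ∀ i : Fin n, volume (Icc (a i) (a i + if i = i0 then h / 2 else h))
      = ENNReal.ofReal (if i = i0 then h / 2 else h) := by
    intro i; rw [Real.volume_Icc]; congr 1; ring
  simp only [step]
  rw [← Finset.mul_prod_erase Finset.univ _ (Finset.mem_univ i0)]
  simp only [if_pos rfl]
  have : ∀ i ∈ Finset.univ.erase i0,
      ENNReal.ofReal (if i = i0 then h / 2 else h) = ENNReal.ofReal h := by
    intro i hi
    rw [if_neg (Finset.mem_erase.1 hi).1]
  rw [Finset.prod_congr rfl this, Finset.prod_const, Finset.card_erase_of_mem (Finset.mem_univ _)]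
  rw [← ENNReal.ofReal_pow hh, ← ENNReal.ofReal_mul (by positivity)]
  congr 1
  simp only [Finset.card_univ, Fintype.card_fin]
  have hn : 0 < n := i0.pos
  calc h / 2 * h ^ (n - 1) = h ^ (n - 1) * h / 2 := by ring
    _ = h ^ n / 2 := by rw [← pow_succ, Nat.sub_add_cancel hn]

lemma integral_abs_model {n : ℕ} {i0 : Fin n} {a : Fin n → ℝ} {h : ℝ} (hh : 0 < h) (c m : ℝ) :
    ∫ x in cube n a h, |Set.indicator (lhalf n i0 a h) (fun _ => c) x - m|
      = h ^ n / 2 * |c - m| + h ^ n / 2 * |m| := by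
  set L := lhalf n i0 a h
  set Q := cube n a h
  have hL : MeasurableSet L := measurableSet_lhalf n i0 a h
  have hQ : MeasurableSet Q := measurableSet_cube n a h
  have hsub : L ⊆ Q := lhalf_subset_cube hh.le
  have hvQ : volume Q = ENNReal.ofReal (h ^ n) := volume_cube n a hh.le
  have hvL : volume L = ENNReal.ofReal (h ^ n / 2) := volume_lhalf n i0 a hh.le
  have hvD : volume (Q \ L) = ENNReal.ofReal (h ^ n / 2) := by
    rw [measure_diff hsub hL.nullMeasurableSet (hvL ▸ ENNReal.ofReal_ne_top), hvQ, hvL,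
      ← ENNReal.ofReal_sub _ (by positivity)]
    congr 1; ring
  have hQsplit : Q = L ∪ (Q \ L) := (Set.union_diff_cancel hsub).symm
  have hfin1 : volume L ≠ ⊤ := hvL ▸ ENNReal.ofReal_ne_top
  have hfin2 : volume (Q \ L) ≠ ⊤ := hvD ▸ ENNReal.ofReal_ne_top
  have eq1 : EqOn (fun x => |Set.indicator L (fun _ => c) x - m|) (fun _ => |c - m|) L := by
    intro x hx; simp [Set.indicator_of_mem hx]
  have eq2 : EqOn (fun x => |Set.indicator L (fun _ => c) x - m|) (fun _ => |m|) (Q \ L) := by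
    intro x hx; simp [Set.indicator_of_notMem hx.2]
  rw [hQsplit, setIntegral_union disjoint_sdiff_right (hQ.diff hL)
      ((IntegrableOn.congr_fun (integrableOn_const hfin1)
        eq1.symm hL))
      ((IntegrableOn.congr_fun (integrableOn_const hfin2)
        eq2.symm (hQ.diff hL))),
    setIntegral_congr_fun hL eq1, setIntegral_congr_fun (hQ.diff hL) eq2,
    setIntegral_const, setIntegral_const, measureReal_def, measureReal_def, hvL, hvD]
  rw [ENNReal.toReal_ofReal (by positivity)]
  simp [smul_eq_mul]

lemma exists_good_scale {n : ℕ} (f : (Fin n → ℝ) → ℝ) (hf : LocallyIntegrable f volume)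
    {x : Fin n → ℝ}
    (hx : Tendsto (fun r => ⨍ y in Metric.closedBall x r, |f y - f x|) (𝓝[>] 0) (𝓝 0))
    {ε : ℝ} (hε : 0 < ε) :
    ∃ δ > 0, ∀ (a : Fin n → ℝ) (h : ℝ), 0 < h → h ≤ δ → x ∈ cube n a h →
      ∫ y in cube n a h, |f y - f x| ≤ ε * h ^ n := by
  have hε' : (0:ℝ) < ε / 2 ^ n := by positivity
  have hev : ∀ᶠ r in 𝓝[>] (0:ℝ),
      (fun r => ⨍ y in Metric.closedBall x r, |f y - f x|) r ≤ ε / 2 ^ n :=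
    hx.eventually_le_const hε'
  obtain ⟨δ, hδpos, hδ⟩ := mem_nhdsGT_iff_exists_Ioc_subset.1 hev
  refine ⟨δ, hδpos, fun a h hh hhδ hxQ => ?_⟩
  have hQB : cube n a h ⊆ Metric.closedBall x h := cube_subset_closedBall hh.le hxQ
  have hint : IntegrableOn (fun y => |f y - f x|) (Metric.closedBall x h) volume := by
    have h1 : IntegrableOn f (Metric.closedBall x h) volume :=
      hf.integrableOn_isCompact (isCompact_closedBall x h)
    exact (h1.sub (integrableOn_const measure_closedBall_lt_top.ne)).abs
  have step1 : ∫ y in cube n a h, |f y - f x| ≤ ∫ y in Metric.closedBall x h, |f y - f x| := by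
    refine setIntegral_mono_set hint ?_ (HasSubset.Subset.eventuallyLE hQB)
    exact Eventually.of_forall fun y => abs_nonneg _
  have havg : ⨍ y in Metric.closedBall x h, |f y - f x| ≤ ε / 2 ^ n := hδ ⟨hh, hhδ⟩
  have hvol : (volume (Metric.closedBall x h)).toReal = (2 * h) ^ n := by
    rw [Real.volume_pi_closedBall x hh.le, ENNReal.toReal_ofReal (by positivity)]
    simp
  have step2 : ∫ y in Metric.closedBall x h, |f y - f x|
      = (volume (Metric.closedBall x h)).toReal • ⨍ y in Metric.closedBall x h, |f y - f x| :=
    (measure_smul_setAverage _ measure_closedBall_lt_top.ne).symm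
  calc ∫ y in cube n a h, |f y - f x| ≤ ∫ y in Metric.closedBall x h, |f y - f x| := step1
    _ = (2*h)^n * ⨍ y in Metric.closedBall x h, |f y - f x| := by
        rw [step2, hvol, smul_eq_mul]
    _ ≤ (2*h)^n * (ε / 2^n) := by
        refine mul_le_mul_of_nonneg_left havg (by positivity)
    _ = ε * h ^ n := by rw [mul_pow]; field_simp

lemma ae_leb (n : ℕ) (f : (Fin n → ℝ) → ℝ) (hf : LocallyIntegrable f volume) :
    ∀ᵐ x, Tendsto (fun r => ⨍ y in Metric.closedBall x r, |f y - f x|) (𝓝[>] 0) (𝓝 0) := by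
  filter_upwards [IsUnifLocDoublingMeasure.ae_tendsto_average_norm_sub (μ := volume) hf 1] with x hx
  have := hx (fun _ : ℝ => x) id tendsto_id ?_
  · simpa [Real.norm_eq_abs] using this
  · filter_upwards [self_mem_nhdsWithin] with r hr
    simp only [one_mul]
    exact Metric.mem_closedBall_self (le_of_lt hr)

lemma cube_volume_pos (n : ℕ) (a : Fin n → ℝ) {h : ℝ} (hh : 0 < h) :
    0 < (volume (cube n a h)).toReal ∧ volume (cube n a h) ≠ ⊤ := by
  rw [volume_cube n a hh.le]
  constructor
  · rw [ENNReal.toReal_ofReal (by positivity)]; positivity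
  · exact ENNReal.ofReal_ne_top

lemma setIntegral_pos_cube {n : ℕ} {f : (Fin n → ℝ) → ℝ} (hf : LocallyIntegrable f volume)
    (hfpos : ∀ᵐ x, 0 < f x) (a : Fin n → ℝ) {h : ℝ} (hh : 0 < h) :
    0 < ∫ x in cube n a h, f x := by
  set Q := cube n a h
  have hIf : IntegrableOn f Q volume := hf.integrableOn_isCompact (isCompact_cube n a h)
  rw [setIntegral_pos_iff_support_of_nonneg_ae
    (ae_restrict_of_ae (hfpos.mono fun x hx => hx.le)) hIf]
  have hnull : volume (Q \ Function.support f) = 0 := by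
    refine measure_mono_null (fun x hx => ?_) (ae_iff.1 hfpos)
    simp only [Set.mem_setOf_eq, not_lt]
    rcases hx with ⟨_, hx2⟩
    simp only [Function.mem_support, not_not] at hx2
    rw [hx2]
  have hQ : (0:ℝ≥0∞) < volume Q := by
    rw [volume_cube n a hh.le]
    exact ENNReal.ofReal_pos.2 (by positivity)
  calc (0:ℝ≥0∞) < volume Q := hQ
    _ ≤ volume (Q ∩ Function.support f) + volume (Q \ Function.support f) :=
        measure_le_inter_add_diff _ _ _
    _ = volume (Function.support f ∩ Q) := by rw [hnull, add_zero, Set.inter_comm]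

lemma upper_bound {n : ℕ} {f g : (Fin n → ℝ) → ℝ} (hf : LocallyIntegrable f volume)
    (hfpos : ∀ᵐ x, 0 < f x) (hg : LocallyIntegrable g volume) (hle : ∀ x, |g x| ≤ |f x|)
    (a : Fin n → ℝ) {h : ℝ} (hh : 0 < h) :
    (∫ x in cube n a h, f x)⁻¹ * ∫ x in cube n a h, |g x - avgI n (cube n a h) g| ≤ 2 := by
  set Q := cube n a h with hQdef
  obtain ⟨hVpos, hVfin⟩ := cube_volume_pos n a hh
  set V := (volume Q).toReal with hVdef
  have hIf : IntegrableOn f Q volume := hf.integrableOn_isCompact (isCompact_cube n a h)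
  have hIg : IntegrableOn g Q volume := hg.integrableOn_isCompact (isCompact_cube n a h)
  set m := avgI n Q g with hmdef
  set I := ∫ x in Q, f x with hIdef
  have hIpos : 0 < I := setIntegral_pos_cube hf hfpos a hh
  have habs : ∫ x in Q, |g x| ≤ I := by
    calc ∫ x in Q, |g x| ≤ ∫ x in Q, |f x| := by
          exact setIntegral_mono hIg.abs hIf.abs hle
      _ = I := by
          refine integral_congr_ae (ae_restrict_of_ae (hfpos.mono fun x hx => ?_))
          exact abs_of_pos hx
  have hm : |m| * V ≤ ∫ x in Q, |g x| := by
    have h1 : |m| ≤ V⁻¹ * ∫ x in Q, |g x| := by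
      rw [hmdef, avgI, abs_mul, abs_inv, abs_of_nonneg ENNReal.toReal_nonneg]
      refine mul_le_mul_of_nonneg_left ?_ (by positivity)
      simpa [Real.norm_eq_abs] using norm_integral_le_integral_norm (μ := volume.restrict Q) g
    calc |m| * V ≤ (V⁻¹ * ∫ x in Q, |g x|) * V := mul_le_mul_of_nonneg_right h1 hVpos.le
      _ = ∫ x in Q, |g x| := by field_simp
  have key : ∫ x in Q, |g x - m| ≤ 2 * I := by
    have hint1 : IntegrableOn (fun x => |g x - m|) Q volume :=
      (hIg.sub (integrableOn_const hVfin)).abs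
    have hint2 : IntegrableOn (fun x => |g x| + |m|) Q volume :=
      hIg.abs.add (integrableOn_const hVfin)
    calc ∫ x in Q, |g x - m| ≤ ∫ x in Q, (|g x| + |m|) := by
          refine setIntegral_mono hint1 hint2 fun x => ?_
          exact (abs_sub _ _)
      _ = (∫ x in Q, |g x|) + V * |m| := by
          rw [integral_add hIg.abs (integrableOn_const hVfin)]
          simp [smul_eq_mul, mul_comm, measureReal_def]
          exact Or.inl rfl
      _ ≤ I + I := add_le_add habs (by linarith)
      _ = 2 * I := by ring
  rw [inv_mul_le_iff₀ hIpos]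
  linarith

end Helpers
section Main

open Set Filter Metric Topology ENNReal

/-- Lemma 4.1 (Lerner–Ombrosi–Rivera-Ríos): if `η₁/η₂ ∉ L^∞` then `BMO_{η₁} ⊄ BMO_{η₂}`. -/
theorem stmt17 (n : ℕ) (hn : 0 < n) (η₁ η₂ : (Fin n → ℝ) → ℝ)
    (h₁ : MeasureTheory.LocallyIntegrable η₁) (h₂ : MeasureTheory.LocallyIntegrable η₂)
    (hpos₁ : ∀ᵐ x, 0 < η₁ x) (hpos₂ : ∀ᵐ x, 0 < η₂ x)
    (hratio : ¬ ∃ C : ℝ, ∀ᵐ x, η₁ x / η₂ x ≤ C) :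
    ∃ b : (Fin n → ℝ) → ℝ, MeasureTheory.LocallyIntegrable b ∧
      (∃ C : ℝ, ∀ (a : Fin n → ℝ) (h : ℝ), 0 < h →
        (∫ x in cube n a h, η₁ x)⁻¹ *
          ∫ x in cube n a h, |b x - avgI n (cube n a h) b| ≤ C) ∧
      ¬ (∃ C : ℝ, ∀ (a : Fin n → ℝ) (h : ℝ), 0 < h →
        (∫ x in cube n a h, η₂ x)⁻¹ *
          ∫ x in cube n a h, |b x - avgI n (cube n a h) b| ≤ C) := by
  classical
  have hae1 := ae_leb n η₁ h₁
  have hae2 := ae_leb n η₂ h₂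
  -- selection of good points with good scales
  have hsel : ∀ k : ℕ, ∃ x : Fin n → ℝ, ∃ δ : ℝ, 0 < δ ∧ 0 < η₁ x ∧ 0 < η₂ x ∧
      (k : ℝ) * η₂ x < η₁ x ∧
      (∀ (a : Fin n → ℝ) (h : ℝ), 0 < h → h ≤ δ → x ∈ cube n a h →
        ∫ y in cube n a h, |η₁ y - η₁ x| ≤ η₁ x / 100 * h ^ n) ∧
      (∀ (a : Fin n → ℝ) (h : ℝ), 0 < h → h ≤ δ → x ∈ cube n a h →
        ∫ y in cube n a h, |η₂ y - η₂ x| ≤ η₂ x / 100 * h ^ n) := by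
    intro k
    have hk : ¬ ∀ᵐ x, η₁ x / η₂ x ≤ (k:ℝ) := fun hc => hratio ⟨k, hc⟩
    by_contra hcon
    simp only [not_exists] at hcon
    apply hk
    filter_upwards [hpos₁, hpos₂, hae1, hae2] with x p1 p2 t1 t2
    by_contra hgt
    push_neg at hgt
    have hx : (k:ℝ) * η₂ x < η₁ x := by
      rw [lt_div_iff₀ p2] at hgt; linarith
    obtain ⟨δ₁, hδ₁, hb1⟩ := exists_good_scale η₁ h₁ t1 (show (0:ℝ) < η₁ x / 100 by positivity)
    obtain ⟨δ₂, hδ₂, hb2⟩ := exists_good_scale η₂ h₂ t2 (show (0:ℝ) < η₂ x / 100 by positivity)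
    exact absurd ⟨lt_min hδ₁ hδ₂, p1, p2, hx,
      fun a h hh hle hm => hb1 a h hh (hle.trans (min_le_left _ _)) hm,
      fun a h hh hle hm => hb2 a h hh (hle.trans (min_le_right _ _)) hm⟩
      (hcon x (min δ₁ δ₂))
  choose xs δs hδpos hp1 hp2 hxratio hleb1 hleb2 using hsel
  set i0 : Fin n := ⟨0, hn⟩ with hi0
  -- side lengths
  let hs : ℕ → ℝ := fun k => Nat.rec (δs 0) (fun k ih => min (δs (k+1)) (ih / 200)) k
  have hs_succ : ∀ k, hs (k+1) = min (δs (k+1)) (hs k / 200) := fun k => rfl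
  have hspos : ∀ k, 0 < hs k := by
    intro k; induction k with
    | zero => exact hδpos 0
    | succ k ih => rw [hs_succ]; exact lt_min (hδpos _) (by positivity)
  have hsle : ∀ k, hs k ≤ δs k := by
    intro k; cases k with
    | zero => exact le_refl _
    | succ k => exact min_le_left _ _
  have hstep : ∀ k, hs (k+1) ≤ hs k / 200 := fun k => min_le_right _ _
  have hgeom : ∀ k i, hs (k+1+i) ≤ hs k / 200 * (1/2)^i := by
    intro k i; induction i with
    | zero => simpa using hstep k
    | succ i ih =>
      have h1 : hs (k+1+i+1) ≤ hs (k+1+i) / 200 := hstep (k+1+i)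
      have h2 : (0:ℝ) < hs (k+1+i) := hspos _
      calc hs (k+1+(i+1)) = hs (k+1+i+1) := by ring_nf
        _ ≤ hs (k+1+i)/200 := h1
        _ ≤ hs (k+1+i)/2 := by linarith
        _ ≤ (hs k/200 * (1/2)^i)/2 := by linarith
        _ = hs k /200 * (1/2)^(i+1) := by ring
  -- the cubes and lower halves
  set Qs : ℕ → Set (Fin n → ℝ) := fun k => cube n (xs k) (hs k) with hQsdef
  set Ls : ℕ → Set (Fin n → ℝ) := fun k => lhalf n i0 (xs k) (hs k) with hLsdef
  have hxmem : ∀ k, xs k ∈ Qs k := fun k i => ⟨le_refl _, by linarith [(hspos k).le]⟩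
  have hLsub : ∀ k, Ls k ⊆ Qs k := fun k => lhalf_subset_cube (hspos k).le
  have hLmeas : ∀ k, MeasurableSet (Ls k) := fun k => measurableSet_lhalf n i0 (xs k) (hs k)
  have hQmeas : ∀ k, MeasurableSet (Qs k) := fun k => measurableSet_cube n (xs k) (hs k)
  set A : Set (Fin n → ℝ) := ⋃ k, (Ls k \ ⋃ j, ⋃ (_ : k < j), Qs j) with hAdef
  have hAmeas : MeasurableSet A := MeasurableSet.iUnion fun k =>
    (hLmeas k).diff (MeasurableSet.iUnion fun j => MeasurableSet.iUnion fun _ => hQmeas j)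
  set b := A.indicator η₁ with hbdef
  have hbloc : MeasureTheory.LocallyIntegrable b := h₁.indicator hAmeas
  have hble : ∀ x, |b x| ≤ |η₁ x| := by
    intro x
    rw [hbdef]
    by_cases hx : x ∈ A
    · rw [Set.indicator_of_mem hx]
    · rw [Set.indicator_of_notMem hx]; simp [abs_nonneg]
  refine ⟨b, hbloc, ⟨2, fun a h hh => upper_bound h₁ hpos₁ hbloc hble a hh⟩, ?_⟩
  rintro ⟨C, hC⟩
  -- choose a large k
  set k := ⌈3*C⌉₊ + 1 with hkdef
  set c₁ := η₁ (xs k) with hc₁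
  set c₂ := η₂ (xs k) with hc₂
  set h := hs k with hhdef
  have hh : 0 < h := hspos k
  set V := h ^ n with hVdef
  have hVpos : 0 < V := by positivity
  set Q := Qs k with hQdef
  set L := Ls k with hLdef
  have hvolQ : volume Q = ENNReal.ofReal V := volume_cube n (xs k) hh.le
  have hQfin : volume Q ≠ ⊤ := by rw [hvolQ]; exact ENNReal.ofReal_ne_top
  have ha : ∫ y in Q, |η₁ y - c₁| ≤ c₁/100 * V :=
    hleb1 k (xs k) h hh (hsle k) (hxmem k)
  have hb2 : ∫ y in Q, |η₂ y - c₂| ≤ c₂/100 * V :=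
    hleb2 k (xs k) h hh (hsle k) (hxmem k)
  -- symmetric difference
  set D := (A \ L) ∪ (L \ A) with hDdef
  have hDmeas : MeasurableSet D := (hAmeas.diff (hLmeas k)).union ((hLmeas k).diff hAmeas)
  have hEsub : Q ∩ D ⊆ ⋃ j, ⋃ (_ : k < j), Qs j := by
    rintro y ⟨hyQ, hyD⟩
    by_contra hnot
    have hiff : y ∈ A ↔ y ∈ L := by
      constructor
      · intro hyA
        rw [hAdef] at hyA
        obtain ⟨m, hmL, hmU⟩ := Set.mem_iUnion.1 hyA
        rcases lt_trichotomy m k with hlt | heq | hgt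
        · exact absurd (Set.mem_iUnion.2 ⟨k, Set.mem_iUnion.2 ⟨hlt, hyQ⟩⟩) hmU
        · rw [hLdef]; rwa [heq] at hmL
        · exact absurd (Set.mem_iUnion.2 ⟨m, Set.mem_iUnion.2 ⟨hgt, hLsub m hmL⟩⟩) hnot
      · intro hyL
        exact Set.mem_iUnion.2 ⟨k, hyL, hnot⟩
    rcases hyD with ⟨ha1, ha2⟩ | ⟨ha1, ha2⟩
    · exact ha2 (hiff.1 ha1)
    · exact ha2 (hiff.2 ha1)
  have hvolU : volume (⋃ j, ⋃ (_ : k < j), Qs j) ≤ ENNReal.ofReal (V/100) := by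
    have hsub2 : (⋃ j, ⋃ (_ : k < j), Qs j) ⊆ ⋃ i : ℕ, Qs (k+1+i) := by
      intro y hy
      obtain ⟨j, hj⟩ := Set.mem_iUnion.1 hy
      obtain ⟨hjk, hyj⟩ := Set.mem_iUnion.1 hj
      refine Set.mem_iUnion.2 ⟨j - (k+1), ?_⟩
      rwa [Nat.add_sub_cancel' hjk]
    have hhalf : ENNReal.ofReal ((1:ℝ)/2) = 2⁻¹ := by
      rw [show (1/2:ℝ) = (2:ℝ)⁻¹ by norm_num, ENNReal.ofReal_inv_of_pos two_pos]
      norm_num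
    calc volume (⋃ j, ⋃ (_ : k < j), Qs j) ≤ volume (⋃ i : ℕ, Qs (k+1+i)) := measure_mono hsub2
      _ ≤ ∑' i : ℕ, volume (Qs (k+1+i)) := measure_iUnion_le _
      _ ≤ ∑' i : ℕ, ENNReal.ofReal (V/200) * (ENNReal.ofReal ((1:ℝ)/2))^i := by
          refine ENNReal.tsum_le_tsum fun i => ?_
          rw [hQsdef]
          simp only
          rw [volume_cube n (xs (k+1+i)) (hspos (k+1+i)).le]
          have h1 : hs (k+1+i) ^ n ≤ (hs k / 200 * (1/2)^i)^n :=
            pow_le_pow_left₀ (hspos _).le (hgeom k i) n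
          have h2 : (hs k / 200 * ((1:ℝ)/2)^i)^n ≤ V/200 * (1/2)^i := by
            rw [mul_pow, div_pow]
            have e1 : (hs k)^n / 200^n ≤ (hs k)^n/200 := by
              apply div_le_div_of_nonneg_left (by positivity) (by norm_num)
              calc (200:ℝ) = 200^1 := (pow_one _).symm
                _ ≤ 200^n := pow_le_pow_right₀ (by norm_num) hn
            have e2 : (((1:ℝ)/2)^i)^n ≤ ((1:ℝ)/2)^i := by
              calc (((1:ℝ)/2)^i)^n ≤ (((1:ℝ)/2)^i)^1 :=
                    pow_le_pow_of_le_one (by positivity) (pow_le_one₀ (by norm_num) (by norm_num)) hn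
                _ = ((1:ℝ)/2)^i := pow_one _
            calc (hs k)^n / 200^n * (((1:ℝ)/2)^i)^n ≤ (hs k)^n/200 * (((1:ℝ)/2)^i)^n :=
                  mul_le_mul_of_nonneg_right e1 (by positivity)
              _ ≤ (hs k)^n/200 * ((1:ℝ)/2)^i := mul_le_mul_of_nonneg_left e2 (by positivity)
              _ = V/200 * ((1:ℝ)/2)^i := by rw [hVdef, hhdef]
          calc ENNReal.ofReal (hs (k+1+i)^n) ≤ ENNReal.ofReal (V/200 * ((1:ℝ)/2)^i) :=
                ENNReal.ofReal_le_ofReal (h1.trans h2)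
            _ = ENNReal.ofReal (V/200) * (ENNReal.ofReal ((1:ℝ)/2))^i := by
                rw [ENNReal.ofReal_mul (by positivity), ENNReal.ofReal_pow (by norm_num)]
      _ = ENNReal.ofReal (V/200) * 2 := by
          rw [ENNReal.tsum_mul_left, ENNReal.tsum_geometric, hhalf, ENNReal.one_sub_inv_two]
          norm_num
      _ = ENNReal.ofReal (V/100) := by
          rw [show (2:ℝ≥0∞) = ENNReal.ofReal 2 by norm_num,
            ← ENNReal.ofReal_mul (by positivity)]
          congr 1; ring
  have hvolD : (volume (Q ∩ D)).toReal ≤ V/100 :=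
    ENNReal.toReal_le_of_le_ofReal (by positivity) ((measure_mono hEsub).trans hvolU)
  -- integrability on Q
  have hQcomp : IsCompact Q := isCompact_cube n (xs k) h
  have hIη₁ : MeasureTheory.IntegrableOn η₁ Q := h₁.integrableOn_isCompact hQcomp
  have hIη₂ : MeasureTheory.IntegrableOn η₂ Q := h₂.integrableOn_isCompact hQcomp
  have hIb : MeasureTheory.IntegrableOn b Q := hbloc.integrableOn_isCompact hQcomp
  set m := avgI n Q b with hmdef
  set g := L.indicator (fun _ : Fin n → ℝ => c₁) with hgdef
  have hIg : MeasureTheory.IntegrableOn g Q :=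
    (MeasureTheory.integrableOn_const hQfin).indicator (hLmeas k)
  have hIm : MeasureTheory.IntegrableOn (fun _ : Fin n → ℝ => m) Q :=
    MeasureTheory.integrableOn_const hQfin
  have hIc : MeasureTheory.IntegrableOn (fun _ : Fin n → ℝ => c₁) Q :=
    MeasureTheory.integrableOn_const hQfin
  have hIind : MeasureTheory.IntegrableOn (D.indicator fun _ : Fin n → ℝ => c₁) Q :=
    hIc.indicator hDmeas
  have hIabs1 : MeasureTheory.IntegrableOn (fun y => |η₁ y - c₁|) Q := (hIη₁.sub hIc).abs
  -- pointwise bound for |b - g|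
  have hptf : ∀ y, |b y - g y| ≤ |η₁ y - c₁| + D.indicator (fun _ : Fin n → ℝ => c₁) y := by
    intro y
    have hind : (0:ℝ) ≤ D.indicator (fun _ : Fin n → ℝ => c₁) y :=
      Set.indicator_nonneg (fun _ _ => (hp1 k).le) y
    by_cases hyA : y ∈ A <;> by_cases hyL : y ∈ L
    · rw [hbdef, hgdef, Set.indicator_of_mem hyA, Set.indicator_of_mem hyL]
      linarith [le_refl |η₁ y - c₁|]
    · have hyD : y ∈ D := Or.inl ⟨hyA, hyL⟩
      rw [hbdef, hgdef, Set.indicator_of_mem hyA, Set.indicator_of_notMem hyL,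
        Set.indicator_of_mem hyD]
      have h1 : |η₁ y| ≤ |η₁ y - c₁| + |c₁| := by
        calc |η₁ y| = |(η₁ y - c₁) + c₁| := by ring_nf
          _ ≤ |η₁ y - c₁| + |c₁| := abs_add_le _ _
      rw [abs_of_pos (hp1 k)] at h1
      simpa using h1
    · have hyD : y ∈ D := Or.inr ⟨hyL, hyA⟩
      rw [hbdef, hgdef, Set.indicator_of_notMem hyA, Set.indicator_of_mem hyL,
        Set.indicator_of_mem hyD]
      simp [abs_nonneg, abs_sub_comm]
      calc |c₁| ≤ c₁ := le_of_eq (abs_of_pos (hp1 k))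
        _ ≤ |η₁ y - c₁| + c₁ := by linarith [abs_nonneg (η₁ y - c₁)]
    · rw [hbdef, hgdef, Set.indicator_of_notMem hyA, Set.indicator_of_notMem hyL]
      simpa using add_nonneg (abs_nonneg _) hind
  have hfbd : ∫ y in Q, |b y - g y| ≤ c₁/100 * V + c₁ * (V/100) := by
    calc ∫ y in Q, |b y - g y|
        ≤ ∫ y in Q, (|η₁ y - c₁| + D.indicator (fun _ : Fin n → ℝ => c₁) y) := by
          have hbg : MeasureTheory.IntegrableOn (fun y => |b y - g y|) Q := (hIb.sub hIg).abs
          exact MeasureTheory.setIntegral_mono hbg (hIabs1.add hIind) hptf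
      _ = (∫ y in Q, |η₁ y - c₁|) + ∫ y in Q, D.indicator (fun _ : Fin n → ℝ => c₁) y :=
          MeasureTheory.integral_add hIabs1 hIind
      _ ≤ c₁/100*V + c₁*(V/100) := by
          refine add_le_add ha ?_
          rw [MeasureTheory.setIntegral_indicator hDmeas, MeasureTheory.setIntegral_const,
            measureReal_def, smul_eq_mul]
          have hc1 := (hp1 k)
          nlinarith [hvolD, ENNReal.toReal_nonneg (a := volume (Q ∩ D))]
  -- lower bound for ∫ |g - m|
  have hgm : ∫ y in Q, |g y - m| = V/2 * |c₁ - m| + V/2 * |m| := integral_abs_model hh c₁ m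
  have hgm_ge : V/2 * c₁ ≤ ∫ y in Q, |g y - m| := by
    rw [hgm]
    have h1 : c₁ ≤ |c₁ - m| + |m| := by
      calc c₁ = |c₁| := (abs_of_pos (hp1 k)).symm
        _ = |(c₁ - m) + m| := by ring_nf
        _ ≤ |c₁ - m| + |m| := abs_add_le _ _
    nlinarith
  -- triangle inequality
  have htri : ∫ y in Q, |g y - m| ≤ (∫ y in Q, |b y - m|) + ∫ y in Q, |b y - g y| := by
    have hIbm : MeasureTheory.IntegrableOn (fun y => |b y - m|) Q := (hIb.sub hIm).abs
    have hIbg : MeasureTheory.IntegrableOn (fun y => |b y - g y|) Q := (hIb.sub hIg).abs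
    calc ∫ y in Q, |g y - m| ≤ ∫ y in Q, (|b y - m| + |b y - g y|) := by
          refine MeasureTheory.setIntegral_mono ((hIg.sub hIm).abs) (hIbm.add hIbg) fun y => ?_
          have he : g y - m = (b y - m) - (b y - g y) := by ring
          rw [he]
          exact abs_sub _ _
      _ = _ := MeasureTheory.integral_add hIbm hIbg
  -- η₂ integral bounds
  have hI₂ : ∫ y in Q, η₂ y ≤ c₂ * V + c₂/100 * V := by
    have hIc2 : MeasureTheory.IntegrableOn (fun _ : Fin n → ℝ => c₂) Q :=
      MeasureTheory.integrableOn_const hQfin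
    have e1 : ∫ y in Q, (η₂ y - c₂) = (∫ y in Q, η₂ y) - (volume Q).toReal * c₂ := by
      rw [MeasureTheory.integral_sub hIη₂ hIc2, MeasureTheory.setIntegral_const, measureReal_def, smul_eq_mul]
    have e2 : ∫ y in Q, (η₂ y - c₂) ≤ ∫ y in Q, |η₂ y - c₂| :=
      MeasureTheory.setIntegral_mono (hIη₂.sub hIc2) ((hIη₂.sub hIc2).abs) fun y => le_abs_self _
    have e4 : (volume Q).toReal = V := by rw [hvolQ, ENNReal.toReal_ofReal hVpos.le]
    rw [e4] at e1
    have := e2.trans hb2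
    linarith
  have hI₂pos : 0 < ∫ y in Q, η₂ y := setIntegral_pos_cube h₂ hpos₂ (xs k) hh
  -- put it together
  have hCk := hC (xs k) h hh
  rw [show cube n (xs k) h = Q from rfl] at hCk
  rw [inv_mul_le_iff₀ hI₂pos] at hCk
  have hmain : (k:ℝ)/3 * ∫ y in Q, η₂ y ≤ ∫ y in Q, |b y - m| := by
    have hr : (k:ℝ) * c₂ < c₁ := hxratio k
    have hk0 : (0:ℝ) ≤ (k:ℝ) := Nat.cast_nonneg k
    have hc2 : (0:ℝ) < c₂ := hp2 k
    nlinarith [mul_le_mul_of_nonneg_left hI₂ (by positivity : (0:ℝ) ≤ (k:ℝ)/3),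
      mul_lt_mul_of_pos_right hr hVpos, mul_le_mul_of_nonneg_left hVpos.le hk0]
  have hfin : (k:ℝ)/3 ≤ C := by
    have h1 : (k:ℝ)/3 * ∫ y in Q, η₂ y ≤ (∫ y in Q, η₂ y) * C := hmain.trans hCk
    nlinarith [hI₂pos]
  have hlarge : 3*C < (k:ℝ) := by
    rw [hkdef]
    push_cast
    linarith [Nat.le_ceil (3*C)]
  linarith

end Main
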